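/- Let Q and R be semi-unital quantales with Q left-sided and R right-sided, and let ϑ_Q : Q → R, ϑ_R : R → Q be mutually inverse join-preserving anti-homomorphisms. An element p of the tensor product Q ⊗ R is a hermitian prime element (with respect to the involution ℓ(α ⊗ β) = ϑ_R(β) ⊗ ϑ_Q(α)) if and only if there exists a prime element q of Q such that p = (q ⊗ ⊤) ∨ (⊤ ⊗ ϑ_Q(q)). -/

import Mathlib

/-- A quantale: a complete lattice with an associative multiplication that
preserves arbitrary joins in each variable. -/
class QuantaleOld (α : Type*) extends CompleteLattice α, Semigroup α where
  mul_sSup_eq : ∀ (a : α) (s : Set α), a * sSup s = ⨆ b ∈ s, a * b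
  sSup_mul_eq : ∀ (s : Set α) (a : α), sSup s * a = ⨆ b ∈ s, b * a

section Defs

variable {α : Type*} [QuantaleOld α]

/-- `a` is left-sided: `⊤ * a ≤ a`. -/
def IsLeftSided (a : α) : Prop := ⊤ * a ≤ a

/-- `a` is right-sided: `a * ⊤ ≤ a`. -/
def IsRightSided (a : α) : Prop := a * ⊤ ≤ a

/-- `a` is two-sided. -/
def IsTwoSided (a : α) : Prop := IsLeftSided a ∧ IsRightSided a

/-- A quantale is semi-unital if `a ≤ ⊤ * a` and `a ≤ a * ⊤` for all `a`. -/
def SemiUnital (α : Type*) [QuantaleOld α] : Prop := ∀ a : α, a ≤ ⊤ * a ∧ a ≤ a * ⊤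

/-- A quantale is semi-integral if `a * ⊤ * b ≤ a * b` for all `a`, `b`. -/
def SemiIntegral (α : Type*) [QuantaleOld α] : Prop := ∀ a b : α, a * ⊤ * b ≤ a * b

/-- A quantale is a factor if its only two-sided elements are `⊥` and `⊤`. -/
def IsFactor (α : Type*) [QuantaleOld α] : Prop := ∀ a : α, IsTwoSided a → a = ⊥ ∨ a = ⊤

/-- Prime element of a quantale. -/
def IsPrime (p : α) : Prop :=
  p ≠ ⊤ ∧ ∀ a b : α, a * b ≤ p → a * ⊤ ≤ p ∨ ⊤ * b ≤ p

/-- Strongly prime element of a quantale. -/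
def IsStronglyPrime (p : α) : Prop :=
  p ≠ ⊤ ∧ ∀ a b : α, a * b ≤ p → a ⊔ a * ⊤ ≤ p ∨ b ⊔ ⊤ * b ≤ p

/-- A quantale is spatial if every element is a meet of prime elements. -/
def Spatial (α : Type*) [QuantaleOld α] : Prop :=
  ∀ a : α, ∃ S : Set α, (∀ p ∈ S, IsPrime p) ∧ a = sInf S

/-- A quantale is strongly spatial if every element is a meet of strongly prime elements. -/
def StronglySpatial (α : Type*) [QuantaleOld α] : Prop :=
  ∀ a : α, ∃ S : Set α, (∀ p ∈ S, IsStronglyPrime p) ∧ a = sInf S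

end Defs

section MyHelpers
variable {α β : Type*} [CompleteLattice α] [CompleteLattice β]

lemma joinmap_sup {g : α → β} (h : ∀ s : Set α, g (sSup s) = ⨆ x ∈ s, g x)
    (x y : α) : g (x ⊔ y) = g x ⊔ g y := by
  have := h {x, y}
  simpa [iSup_or, iSup_sup_eq] using this

lemma joinmap_mono {g : α → β} (h : ∀ s : Set α, g (sSup s) = ⨆ x ∈ s, g x) :
    Monotone g := by
  intro x y hxy
  have := joinmap_sup h x y
  rw [sup_eq_right.mpr hxy] at this
  rw [this]
  exact le_sup_left

end MyHelpers

lemma QuantaleOld.mul_le_mul' {α : Type*} [QuantaleOld α] {a b c d : α}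
    (h1 : a ≤ b) (h2 : c ≤ d) : a * c ≤ b * d := by
  have hL : a * c ≤ b * c :=
    joinmap_mono (g := fun x => x * c) (fun s => QuantaleOld.sSup_mul_eq s c) h1
  have hR : b * c ≤ b * d :=
    joinmap_mono (g := fun x => b * x) (fun s => QuantaleOld.mul_sSup_eq b s) h2
  exact hL.trans hR

/-- Let `Q` (left-sided, semi-unital) and `R` (right-sided, semi-unital)
be quantales, `ϑQ, ϑR` mutually inverse join-preserving anti-homomorphisms, and let
`ℓ` be the involution of the tensor product `T = Q ⊗ R` determined by
`ℓ (α ⊗ β) = ϑR β ⊗ ϑQ α`.  Then `p ∈ T` is a hermitian prime element iff there is a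
prime element `q` of `Q` with `p = (q ⊗ ⊤) ⊔ (⊤ ⊗ ϑQ q)`. -/
theorem stmt13 {Q R T : Type u} [QuantaleOld Q] [QuantaleOld R] [QuantaleOld T]
    (hQls : ∀ a : Q, IsLeftSided a) (hQsu : SemiUnital Q)
    (hRrs : ∀ b : R, IsRightSided b) (hRsu : SemiUnital R)
    (tmul : Q → R → T)
    (htmulL : ∀ (s : Set Q) (b : R), tmul (sSup s) b = ⨆ a ∈ s, tmul a b)
    (htmulR : ∀ (a : Q) (s : Set R), tmul a (sSup s) = ⨆ b ∈ s, tmul a b)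
    (htmulMul : ∀ (a₁ a₂ : Q) (b₁ b₂ : R),
      tmul a₁ b₁ * tmul a₂ b₂ = tmul (a₁ * a₂) (b₁ * b₂))
    (hgen : ∀ t : T, ∃ s : Set (Q × R), t = ⨆ p ∈ s, tmul p.1 p.2)
    (huniv : ∀ (S : Type u) [CompleteLattice S] (f : Q → R → S),
      (∀ (s : Set Q) (b : R), f (sSup s) b = ⨆ a ∈ s, f a b) →
      (∀ (a : Q) (s : Set R), f a (sSup s) = ⨆ b ∈ s, f a b) →
      ∃! g : T → S, (∀ s : Set T, g (sSup s) = ⨆ x ∈ s, g x) ∧ ∀ a b, g (tmul a b) = f a b)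
    (ϑQ : Q → R) (ϑR : R → Q)
    (hϑQjoin : ∀ s : Set Q, ϑQ (sSup s) = ⨆ a ∈ s, ϑQ a)
    (hϑRjoin : ∀ s : Set R, ϑR (sSup s) = ⨆ b ∈ s, ϑR b)
    (hϑQanti : ∀ a b : Q, ϑQ (a * b) = ϑQ b * ϑQ a)
    (hϑRanti : ∀ a b : R, ϑR (a * b) = ϑR b * ϑR a)
    (hRQ : ∀ a : Q, ϑR (ϑQ a) = a) (hQR : ∀ b : R, ϑQ (ϑR b) = b)
    (ℓ : T → T)
    (hℓjoin : ∀ s : Set T, ℓ (sSup s) = ⨆ x ∈ s, ℓ x)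
    (hℓ : ∀ (a : Q) (b : R), ℓ (tmul a b) = tmul (ϑR b) (ϑQ a)) :
    ∀ p : T, (IsPrime p ∧ ℓ p = p) ↔
      ∃ q : Q, IsPrime q ∧ p = tmul q ⊤ ⊔ tmul ⊤ (ϑQ q) := by
  classical
  -- generic facts
  have tmono : ∀ {a a' : Q} {b b' : R}, a ≤ a' → b ≤ b' → tmul a b ≤ tmul a' b' := by
    intro a a' b b' ha hb
    have h1 : tmul a b ≤ tmul a' b :=
      joinmap_mono (g := fun x => tmul x b) (fun s => htmulL s b) ha
    have h2 : tmul a' b ≤ tmul a' b' :=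
      joinmap_mono (g := fun x => tmul a' x) (fun s => htmulR a' s) hb
    exact h1.trans h2
  have hQtop : ∀ a : Q, ⊤ * a = a := fun a => le_antisymm (hQls a) (hQsu a).1
  have hRtop : ∀ b : R, b * ⊤ = b := fun b => le_antisymm (hRrs b) (hRsu b).2
  have hϑQmono : Monotone ϑQ := joinmap_mono hϑQjoin
  have hϑRmono : Monotone ϑR := joinmap_mono hϑRjoin
  have hϑQtop : ϑQ ⊤ = ⊤ := le_antisymm le_top (by
    calc (⊤:R) = ϑQ (ϑR ⊤) := (hQR ⊤).symm
    _ ≤ ϑQ ⊤ := hϑQmono le_top)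
  have hϑRtop : ϑR ⊤ = ⊤ := le_antisymm le_top (by
    calc (⊤:Q) = ϑR (ϑQ ⊤) := (hRQ ⊤).symm
    _ ≤ ϑR ⊤ := hϑRmono le_top)
  have hℓmono : Monotone ℓ := joinmap_mono hℓjoin
  have hℓsup : ∀ x y : T, ℓ (x ⊔ y) = ℓ x ⊔ ℓ y := joinmap_sup hℓjoin
  have hTtop : (⊤ : T) = tmul ⊤ ⊤ := by
    refine le_antisymm ?_ le_top
    obtain ⟨s, hs⟩ := hgen ⊤
    rw [hs]
    exact iSup₂_le fun x _ => tmono le_top le_top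
  have eq1 : ∀ (a : Q) (b : R), tmul a b * (⊤:T) = tmul (a * ⊤) b := by
    intro a b
    rw [hTtop, htmulMul, hRtop]
  have eq2 : ∀ (a : Q) (b : R), (⊤:T) * tmul a b = tmul a (⊤ * b) := by
    intro a b
    rw [hTtop, htmulMul, hQtop]
  have hsum_mul : ∀ (s : Set (Q × R)) (y : T),
      (⨆ z ∈ s, tmul z.1 z.2) * y = ⨆ z ∈ s, tmul z.1 z.2 * y := by
    intro s y
    rw [← sSup_image, QuantaleOld.sSup_mul_eq, iSup_image]
  have hmul_sum : ∀ (y : T) (s : Set (Q × R)),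
      y * (⨆ z ∈ s, tmul z.1 z.2) = ⨆ z ∈ s, y * tmul z.1 z.2 := by
    intro y s
    rw [← sSup_image, QuantaleOld.mul_sSup_eq, iSup_image]
  intro p
  constructor
  · rintro ⟨⟨hpne, hpprime⟩, hherm⟩
    set q : Q := sSup {a : Q | tmul a ⊤ ≤ p} with hqdef
    have hqle : tmul q ⊤ ≤ p := by
      rw [hqdef, htmulL]
      exact iSup₂_le fun a ha => ha
    have hmem : ∀ a : Q, tmul a ⊤ ≤ p → a ≤ q := fun a ha => le_sSup ha
    have hqne : q ≠ ⊤ := by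
      intro h
      apply hpne
      refine le_antisymm le_top ?_
      calc (⊤:T) = tmul ⊤ ⊤ := hTtop
      _ = tmul q ⊤ := by rw [h]
      _ ≤ p := hqle
    have hqprime : IsPrime q := by
      refine ⟨hqne, fun a b hab => ?_⟩
      have h1 : tmul a ⊤ * tmul b ⊤ ≤ p := by
        rw [htmulMul, hRtop]
        exact le_trans (tmono hab le_rfl) hqle
      rcases hpprime _ _ h1 with h | h
      · left
        rw [eq1] at h
        exact hmem _ h
      · right
        rw [eq2, hRtop] at h
        rw [hQtop]
        exact hmem _ h
    refine ⟨q, hqprime, ?_⟩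
    have htr : tmul ⊤ (ϑQ q) ≤ p := by
      have h := hℓmono hqle
      rwa [hℓ, hϑRtop, hherm] at h
    refine le_antisymm ?_ (sup_le hqle htr)
    obtain ⟨s, hs⟩ := hgen p
    conv_lhs => rw [hs]
    apply iSup₂_le
    intro z hz
    have hzle : tmul z.1 z.2 ≤ p := by
      conv_rhs => rw [hs]
      exact le_iSup₂ (f := fun (z : Q × R) (_ : z ∈ s) => tmul z.1 z.2) z hz
    have hfac : tmul ⊤ z.2 * tmul z.1 ⊤ ≤ p := by
      rw [htmulMul, hQtop, hRtop]
      exact hzle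
    rcases hpprime _ _ hfac with h | h
    · have hb : tmul ⊤ z.2 ≤ p := by rwa [eq1, hQtop] at h
      have hbr : tmul (ϑR z.2) ⊤ ≤ p := by
        have h2 := hℓmono hb
        rwa [hℓ, hϑQtop, hherm] at h2
      have hz2 : z.2 ≤ ϑQ q := by
        have h3 := hϑQmono (hmem _ hbr)
        rwa [hQR] at h3
      exact le_trans (tmono le_top hz2) le_sup_right
    · have ha : tmul z.1 ⊤ ≤ p := by rwa [eq2, hRtop] at h
      exact le_trans (tmono (hmem _ ha) le_top) le_sup_left
  · rintro ⟨q, ⟨hqne, hqprime⟩, rfl⟩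
    have hrne : ϑQ q ≠ ⊤ := by
      intro h
      apply hqne
      rw [← hRQ q, h, hϑRtop]
    have hrprime2 : ∀ b₁ b₂ : R, b₁ * b₂ ≤ ϑQ q → b₁ ≤ ϑQ q ∨ ⊤ * b₂ ≤ ϑQ q := by
      intro b₁ b₂ hb
      have h0 : ϑR b₂ * ϑR b₁ ≤ q := by
        have h1 := hϑRmono hb
        rwa [hϑRanti, hRQ] at h1
      rcases hqprime _ _ h0 with h | h
      · right
        have h2 := hϑQmono h
        rwa [hϑQanti, hϑQtop, hQR] at h2
      · left
        rw [hQtop] at h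
        have h2 := hϑQmono h
        rwa [hQR] at h2
    -- separating functional into Set PUnit
    have fbiL : ∀ (s : Set Q) (b : R),
        ({_x : PUnit.{u+1} | ¬(sSup s ≤ q) ∧ ¬(b ≤ ϑQ q)} : Set PUnit.{u+1}) =
          ⨆ a ∈ s, {_x : PUnit.{u+1} | ¬(a ≤ q) ∧ ¬(b ≤ ϑQ q)} := by
      intro s b
      ext x
      simp only [Set.mem_setOf_eq, Set.iSup_eq_iUnion, Set.mem_iUnion]
      constructor
      · rintro ⟨hns, hbr⟩
        have : ∃ a ∈ s, ¬ a ≤ q := by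
          by_contra hcc
          push_neg at hcc
          exact hns (sSup_le hcc)
        obtain ⟨a, ha, haq⟩ := this
        exact ⟨a, ha, haq, hbr⟩
      · rintro ⟨a, ha, haq, hbr⟩
        exact ⟨fun h => haq (le_trans (le_sSup ha) h), hbr⟩
    have fbiR : ∀ (a : Q) (s : Set R),
        ({_x : PUnit.{u+1} | ¬(a ≤ q) ∧ ¬(sSup s ≤ ϑQ q)} : Set PUnit.{u+1}) =
          ⨆ b ∈ s, {_x : PUnit.{u+1} | ¬(a ≤ q) ∧ ¬(b ≤ ϑQ q)} := by
      intro a s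
      ext x
      simp only [Set.mem_setOf_eq, Set.iSup_eq_iUnion, Set.mem_iUnion]
      constructor
      · rintro ⟨haq, hns⟩
        have : ∃ b ∈ s, ¬ b ≤ ϑQ q := by
          by_contra hcc
          push_neg at hcc
          exact hns (sSup_le hcc)
        obtain ⟨b, hb, hbr⟩ := this
        exact ⟨b, hb, haq, hbr⟩
      · rintro ⟨b, hb, haq, hbr⟩
        exact ⟨haq, fun h => hbr (le_trans (le_sSup hb) h)⟩
    obtain ⟨g, ⟨hgjoin, hgval⟩, -⟩ :=
      huniv (Set PUnit.{u+1})
        (fun a b => {_x : PUnit.{u+1} | ¬(a ≤ q) ∧ ¬(b ≤ ϑQ q)}) fbiL fbiR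
    have gmono : Monotone g := joinmap_mono hgjoin
    have gsup : ∀ x y : T, g (x ⊔ y) = g x ⊔ g y := joinmap_sup hgjoin
    have key : ∀ (a : Q) (b : R), tmul a b ≤ tmul q ⊤ ⊔ tmul ⊤ (ϑQ q) →
        a ≤ q ∨ b ≤ ϑQ q := by
      intro a b h
      by_contra hcon
      push_neg at hcon
      have h1 := gmono h
      rw [gsup, hgval, hgval, hgval] at h1
      have hx : PUnit.unit ∈ ({_x : PUnit.{u+1} | ¬(a ≤ q) ∧ ¬(b ≤ ϑQ q)} : Set PUnit.{u+1}) :=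
        ⟨hcon.1, hcon.2⟩
      have h2 := h1 hx
      simp at h2
    have pne : tmul q ⊤ ⊔ tmul ⊤ (ϑQ q) ≠ ⊤ := by
      intro h
      have h1 : tmul ⊤ ⊤ ≤ tmul q ⊤ ⊔ tmul ⊤ (ϑQ q) := by
        rw [h]; exact le_top
      rcases key ⊤ ⊤ h1 with h' | h'
      · exact hqne (le_antisymm le_top h')
      · exact hrne (le_antisymm le_top h')
    constructor
    · refine ⟨pne, fun x y hxy => ?_⟩
      by_cases hx : x * ⊤ ≤ tmul q ⊤ ⊔ tmul ⊤ (ϑQ q)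
      · exact Or.inl hx
      right
      obtain ⟨s, hsx⟩ := hgen x
      obtain ⟨t, hty⟩ := hgen y
      have hxT : x * ⊤ = ⨆ z ∈ s, tmul (z.1 * ⊤) z.2 := by
        rw [hsx, hsum_mul]
        exact iSup_congr fun z => iSup_congr fun _ => eq1 z.1 z.2
      rw [hxT] at hx
      have hex : ∃ z ∈ s, ¬ tmul (z.1 * ⊤) z.2 ≤ tmul q ⊤ ⊔ tmul ⊤ (ϑQ q) := by
        by_contra hcc
        push_neg at hcc
        exact hx (iSup₂_le hcc)
      obtain ⟨z, hzs, hznle⟩ := hex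
      have hz1 : ¬ (z.1 * ⊤ ≤ q) := fun h =>
        hznle (le_trans (tmono h le_top) le_sup_left)
      have hz2 : ¬ (z.2 ≤ ϑQ q) := fun h =>
        hznle (le_trans (tmono le_top h) le_sup_right)
      have hTy : (⊤:T) * y = ⨆ w ∈ t, tmul w.1 (⊤ * w.2) := by
        rw [hty, hmul_sum]
        exact iSup_congr fun w => iSup_congr fun _ => eq2 w.1 w.2
      rw [hTy]
      apply iSup₂_le
      intro w hw
      have hprod : tmul (z.1 * w.1) (z.2 * w.2) ≤ tmul q ⊤ ⊔ tmul ⊤ (ϑQ q) := by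
        rw [← htmulMul]
        refine le_trans (QuantaleOld.mul_le_mul' ?_ ?_) hxy
        · rw [hsx]; exact le_iSup₂ (f := fun (z : Q × R) (_ : z ∈ s) => tmul z.1 z.2) z hzs
        · rw [hty]; exact le_iSup₂ (f := fun (w : Q × R) (_ : w ∈ t) => tmul w.1 w.2) w hw
      rcases key _ _ hprod with h | h
      · rcases hqprime _ _ h with h' | h'
        · exact absurd h' hz1
        · rw [hQtop] at h'
          exact le_trans (tmono h' le_top) le_sup_left
      · rcases hrprime2 _ _ h with h' | h'
        · exact absurd h' hz2
        · exact le_trans (tmono le_top h') le_sup_right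
    · rw [hℓsup, hℓ, hℓ, hϑQtop, hϑRtop, hRQ]
      exact sup_comm _ _
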